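/- Let R be a standard graded Noetherian ring with R_0 = A, let X ∈ 𝔄(R), and let D be a finitely generated graded R-submodule of X. Then X/D ∈ 𝔄(R). -/

import Mathlib

/-- Data of a standard graded algebra extension `S ⊇ R` (given by an injective graded
`A`-algebra map `f : R → S`) together with a finitely generated graded `S`-module `N`
and a finitely generated graded `R`-submodule `M ⊆ N`. -/
structure ExtData (A : Type) [CommRing A] (R : Type) [CommRing R] [Algebra A R]
    (𝒜 : ℕ → Submodule A R) where
  S : Type
  [ringS : CommRing S]
  [algS : Algebra A S]
  ℬ : ℕ → Submodule A S
  [gradedS : GradedAlgebra ℬ]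
  standardS : ∀ n, ℬ n = ℬ 1 ^ n
  f : R →ₐ[A] S
  f_inj : Function.Injective f
  f_graded : ∀ (n : ℕ), ∀ r ∈ 𝒜 n, f r ∈ ℬ n
  N : Type
  [acgN : AddCommGroup N]
  [modAN : Module A N]
  [modSN : Module S N]
  [towSN : IsScalarTower A S N]
  finN : Module.Finite S N
  𝒩 : ℤ → Submodule A N
  [decN : DirectSum.Decomposition 𝒩]
  smulN : ∀ (i : ℕ) (n : ℤ), ∀ s ∈ ℬ i, ∀ x ∈ 𝒩 n, s • x ∈ 𝒩 (n + i)
  [modRN : Module R N]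
  [towRN : IsScalarTower A R N]
  compat : ∀ (r : R) (x : N), r • x = f r • x
  M : Submodule R N
  M_fg : M.FG
  M_graded : ∀ x ∈ M, ∀ n : ℤ, (DirectSum.decompose 𝒩 x n : N) ∈ M

attribute [instance] ExtData.ringS ExtData.algS ExtData.gradedS ExtData.acgN
  ExtData.modAN ExtData.modSN ExtData.towSN ExtData.decN ExtData.modRN ExtData.towRN

/-- `Y` is a graded (homogeneous) `R`-submodule of the graded module `(X, ℳ)`. -/
def IsGradedSub (A : Type) [CommRing A] (R : Type) [CommRing R] [Algebra A R]
    (X : Type) [AddCommGroup X] [Module A X] [Module R X] [IsScalarTower A R X]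
    (ℳ : ℤ → Submodule A X) (Y : Submodule R X) : Prop :=
  Y.restrictScalars A = ⨆ n : ℤ, (Y.restrictScalars A ⊓ ℳ n)

/-- Membership in `𝔄(R)(1)`: the graded `R`-module `(X, ℳ)` is isomorphic, as a graded
`R`-module, to a quotient `N/M` coming from some `ExtData`. -/
def InA1 (A : Type) [CommRing A] (R : Type) [CommRing R] [Algebra A R]
    (𝒜 : ℕ → Submodule A R)
    (X : Type) [AddCommGroup X] [Module A X] [Module R X] [IsScalarTower A R X]
    (ℳ : ℤ → Submodule A X) : Prop :=
  ∃ (D : ExtData A R 𝒜) (e : X ≃ₗ[R] (D.N ⧸ D.M)),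
    ∀ n : ℤ, e '' (ℳ n : Set X) = D.M.mkQ '' (D.𝒩 n : Set D.N)

/-- Membership in `𝔄(R) = 𝔄(R)(2)`: there is a graded submodule `Y ⊆ X` with
`Y ∈ 𝔄(R)(1)` (with the induced grading) and `X/Y` finitely generated over `R`. -/
def InA (A : Type) [CommRing A] (R : Type) [CommRing R] [Algebra A R]
    (𝒜 : ℕ → Submodule A R)
    (X : Type) [AddCommGroup X] [Module A X] [Module R X] [IsScalarTower A R X]
    (ℳ : ℤ → Submodule A X) : Prop :=
  ∃ Y : Submodule R X,
    IsGradedSub A R X ℳ Y ∧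
    InA1 A R 𝒜 ↥Y (fun n => (ℳ n).comap (Y.subtype.restrictScalars A)) ∧
    Module.Finite R (X ⧸ Y)

set_option synthInstance.maxHeartbeats 1000000
set_option maxHeartbeats 4000000

lemma decomp_mem_of_gradedSub
    {A : Type} [CommRing A] {R : Type} [CommRing R] [Algebra A R]
    {X : Type} [AddCommGroup X] [Module A X] [Module R X] [IsScalarTower A R X]
    (ℳ : ℤ → Submodule A X) [DirectSum.Decomposition ℳ]
    {Y : Submodule R X} (hY : IsGradedSub A R X ℳ Y)
    {x : X} (hx : x ∈ Y) (n : ℤ) :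
    (DirectSum.decompose ℳ x n : X) ∈ Y := by
  have hx' : x ∈ ⨆ k : ℤ, (Y.restrictScalars A ⊓ ℳ k) := by
    have : x ∈ Y.restrictScalars A := hx
    rwa [hY] at this
  refine Submodule.iSup_induction (motive := fun y : X => (DirectSum.decompose ℳ y n : X) ∈ Y)
    _ hx' (fun k y hy => ?_) ?_ (fun a b ha hb => ?_)
  · rcases hy with ⟨hy1, hy2⟩
    by_cases h : k = n
    · subst h; rw [DirectSum.decompose_of_mem_same ℳ hy2]; exact hy1
    · rw [DirectSum.decompose_of_mem_ne ℳ hy2 h]; exact zero_mem _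
  · simp
  · dsimp only at ha hb ⊢
    rw [DirectSum.decompose_add, DirectSum.add_apply, Submodule.coe_add]
    exact add_mem ha hb

lemma commute_decompose
    {A : Type} [CommRing A] {R : Type} [CommRing R] [Algebra A R]
    {X : Type} [AddCommGroup X] [Module A X] [Module R X] [IsScalarTower A R X]
    (ℳ : ℤ → Submodule A X) [DirectSum.Decomposition ℳ]
    {Y : Submodule R X} (hY : IsGradedSub A R X ℳ Y)
    {N : Type} [AddCommGroup N] [Module A N] [Module R N] [IsScalarTower A R N]
    (𝒩 : ℤ → Submodule A N) [DirectSum.Decomposition 𝒩]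
    (M0 : Submodule R N) (hM0 : ∀ x ∈ M0, ∀ n : ℤ, (DirectSum.decompose 𝒩 x n : N) ∈ M0)
    (e : ↥Y ≃ₗ[R] N ⧸ M0)
    (he : ∀ n : ℤ, ⇑e '' (((ℳ n).comap (Y.subtype.restrictScalars A) : Submodule A ↥Y) : Set ↥Y)
        = ⇑M0.mkQ '' ((𝒩 n : Submodule A N) : Set N)) :
    ∀ (y : X) (hy : y ∈ Y) (z : N), e ⟨y, hy⟩ = M0.mkQ z →
      ∀ (n : ℤ) (hy' : (DirectSum.decompose ℳ y n : X) ∈ Y),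
        e ⟨(DirectSum.decompose ℳ y n : X), hy'⟩ = M0.mkQ (DirectSum.decompose 𝒩 z n : N) := by
  have hmk : ∀ {u v : N}, M0.mkQ u = M0.mkQ v ↔ u - v ∈ M0 := by
    intro u v
    simp only [Submodule.mkQ_apply]
    exact Submodule.Quotient.eq M0
  intro y hy
  have hy2 : y ∈ ⨆ k : ℤ, (Y.restrictScalars A ⊓ ℳ k) := by
    have : y ∈ Y.restrictScalars A := hy
    rwa [hY] at this
  revert hy
  induction hy2 using Submodule.iSup_induction' with
  | mem k y hyk =>
    intro hy z hz n hy'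
    obtain ⟨hyY, hyM⟩ := hyk
    -- from `he`: e ⟨y, hy⟩ = M0.mkQ u with u ∈ 𝒩 k
    have him : e ⟨y, hy⟩ ∈ ⇑M0.mkQ '' ((𝒩 k : Submodule A N) : Set N) := by
      rw [← he k]
      exact ⟨⟨y, hy⟩, by simpa [Submodule.mem_comap] using hyM, rfl⟩
    obtain ⟨u, hu, huz⟩ := him
    have hzu : u - z ∈ M0 := hmk.mp (by rw [huz, hz])
    have hsub : (DirectSum.decompose 𝒩 (u - z) n : N) ∈ M0 := hM0 _ hzu n
    have hdecsub : (DirectSum.decompose 𝒩 (u - z) n : N)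
        = (DirectSum.decompose 𝒩 u n : N) - (DirectSum.decompose 𝒩 z n : N) := by
      rw [DirectSum.decompose_sub, DirectSum.sub_apply]; rfl
    by_cases h : k = n
    · subst h
      have h1 : (⟨(DirectSum.decompose ℳ y k : X), hy'⟩ : ↥Y) = ⟨y, hy⟩ :=
        Subtype.ext (DirectSum.decompose_of_mem_same ℳ hyM)
      have h2 : (DirectSum.decompose 𝒩 u k : N) = u := DirectSum.decompose_of_mem_same 𝒩 hu
      rw [h1, hz, eq_comm, hmk]
      have : (DirectSum.decompose 𝒩 z k : N) - z = ((DirectSum.decompose 𝒩 z k : N) - u) + (u - z) := by abel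
      rw [this]
      refine add_mem ?_ hzu
      have := hM0 _ hzu k
      rw [hdecsub, h2] at this
      simpa using neg_mem this
    · have h1 : (⟨(DirectSum.decompose ℳ y n : X), hy'⟩ : ↥Y) = 0 :=
        Subtype.ext (by rw [DirectSum.decompose_of_mem_ne ℳ hyM h]; rfl)
      have h2 : (DirectSum.decompose 𝒩 u n : N) = 0 := DirectSum.decompose_of_mem_ne 𝒩 hu h
      have h3 : (DirectSum.decompose 𝒩 z n : N) ∈ M0 := by
        have := hM0 _ hzu n
        rw [hdecsub, h2, zero_sub] at this
        simpa using neg_mem this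
      rw [h1, map_zero, eq_comm]
      simpa [Submodule.mkQ_apply, Submodule.Quotient.mk_eq_zero] using h3
  | zero =>
    intro hy z hz n hy'
    have h0 : (⟨(0 : X), hy⟩ : ↥Y) = 0 := rfl
    rw [h0, map_zero, eq_comm] at hz
    have hzM : z ∈ M0 := by
      simpa [Submodule.mkQ_apply, Submodule.Quotient.mk_eq_zero] using hz
    have h1 : (⟨(DirectSum.decompose ℳ (0 : X) n : X), hy'⟩ : ↥Y) = 0 :=
      Subtype.ext (by simp)
    rw [h1, map_zero, eq_comm]
    simpa [Submodule.mkQ_apply, Submodule.Quotient.mk_eq_zero] using hM0 _ hzM n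
  | add y₁ y₂ hm1 hm2 C1 C2 =>
    intro hy z hz n hy'
    have hy1 : y₁ ∈ Y := by
      have : y₁ ∈ Y.restrictScalars A := by rw [hY]; exact hm1
      exact this
    have hy2' : y₂ ∈ Y := by
      have : y₂ ∈ Y.restrictScalars A := by rw [hY]; exact hm2
      exact this
    obtain ⟨z₁, hz₁⟩ := Submodule.mkQ_surjective M0 (e ⟨y₁, hy1⟩)
    have hzz : e ⟨y₂, hy2'⟩ = M0.mkQ (z - z₁) := by
      have hsum : (⟨y₁ + y₂, hy⟩ : ↥Y) = ⟨y₁, hy1⟩ + ⟨y₂, hy2'⟩ := rfl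
      rw [hsum, map_add] at hz
      rw [map_sub, ← hz, hz₁]
      abel
    have hd1 : (DirectSum.decompose ℳ y₁ n : X) ∈ Y := decomp_mem_of_gradedSub ℳ hY hy1 n
    have hd2 : (DirectSum.decompose ℳ y₂ n : X) ∈ Y := decomp_mem_of_gradedSub ℳ hY hy2' n
    have e1 := C1 hy1 z₁ hz₁.symm n hd1
    have e2 := C2 hy2' (z - z₁) hzz n hd2
    have hsplit : (⟨(DirectSum.decompose ℳ (y₁ + y₂) n : X), hy'⟩ : ↥Y)
        = ⟨(DirectSum.decompose ℳ y₁ n : X), hd1⟩ + ⟨(DirectSum.decompose ℳ y₂ n : X), hd2⟩ := by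
      apply Subtype.ext
      show (DirectSum.decompose ℳ (y₁ + y₂) n : X)
          = (DirectSum.decompose ℳ y₁ n : X) + (DirectSum.decompose ℳ y₂ n : X)
      rw [DirectSum.decompose_add, DirectSum.add_apply]; rfl
    rw [hsplit, map_add, e1, e2, ← map_add]
    congr 1
    rw [← Submodule.coe_add, ← DirectSum.add_apply, ← DirectSum.decompose_add, add_sub_cancel]

/-- Let `R` be a standard graded Noetherian ring with `R_0 = A`, `X ∈ 𝔄(R)` a graded
`R`-module and `D ⊆ X` a finitely generated graded `R`-submodule.  Then
`X/D ∈ 𝔄(R)` (with the quotient grading). -/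
theorem stmt10 (A : Type) [CommRing A] [IsNoetherianRing A]
    (R : Type) [CommRing R] [Algebra A R] [IsNoetherianRing R]
    (𝒜 : ℕ → Submodule A R) [GradedAlgebra 𝒜] (hstd : ∀ n, 𝒜 n = 𝒜 1 ^ n)
    (X : Type) [AddCommGroup X] [Module A X] [Module R X] [IsScalarTower A R X]
    (ℳ : ℤ → Submodule A X) [DirectSum.Decomposition ℳ]
    (hsmul : ∀ (i : ℕ) (n : ℤ), ∀ r ∈ 𝒜 i, ∀ x ∈ ℳ n, r • x ∈ ℳ (n + i))
    (hX : InA A R 𝒜 X ℳ)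
    (D : Submodule R X) (hDfg : D.FG) (hDgr : IsGradedSub A R X ℳ D) :
    InA A R 𝒜 (X ⧸ D) (fun n => (ℳ n).map (D.mkQ.restrictScalars A)) := by
  classical
  obtain ⟨Y, hYgr, ⟨D0, e, he⟩, hfin⟩ := hX
  haveI := hfin
  set Y' : Submodule R (X ⧸ D) := Y.map D.mkQ with hY'def
  set φ : D0.N →ₗ[R] X ⧸ D :=
    (D.mkQ.comp Y.subtype).comp
      ((e.symm : (D0.N ⧸ D0.M) →ₗ[R] ↥Y).comp D0.M.mkQ) with hφdef
  have hφ : ∀ z : D0.N, φ z = D.mkQ ((e.symm (D0.M.mkQ z) : ↥Y) : X) := fun z => rfl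
  have hrange : LinearMap.range φ = Y' := by
    apply le_antisymm
    · rintro v ⟨z, rfl⟩
      exact ⟨((e.symm (D0.M.mkQ z) : ↥Y) : X), (e.symm (D0.M.mkQ z)).2, rfl⟩
    · rintro v ⟨y, hy, rfl⟩
      obtain ⟨z, hz⟩ := Submodule.mkQ_surjective D0.M (e ⟨y, hy⟩)
      exact ⟨z, by rw [hφ, hz, e.symm_apply_apply]⟩
  set M' : Submodule R D0.N := LinearMap.ker φ with hM'def
  have hmem' : ∀ z : D0.N, z ∈ M' ↔ ((e.symm (D0.M.mkQ z) : ↥Y) : X) ∈ D := by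
    intro z
    rw [hM'def, LinearMap.mem_ker, hφ, Submodule.mkQ_apply, Submodule.Quotient.mk_eq_zero]
  have hMle : D0.M ≤ M' := by
    intro z hz
    rw [hmem' z]
    have h0 : D0.M.mkQ z = 0 := by rwa [Submodule.mkQ_apply, Submodule.Quotient.mk_eq_zero]
    rw [h0, map_zero]
    simpa using zero_mem D
  -- finite generation of M'
  have hYDfg : (D.comap Y.subtype).FG := by
    haveI : IsNoetherian R ↥D := isNoetherian_of_fg_of_noetherian D hDfg
    have h1 : (Y.comap D.subtype).FG := IsNoetherian.noetherian _
    have h2 : ((Y.comap D.subtype).map D.subtype).FG := h1.map _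
    rw [Submodule.map_comap_subtype] at h2
    apply Submodule.fg_of_fg_map_injective Y.subtype (Submodule.injective_subtype Y)
    rw [Submodule.map_comap_subtype]
    rwa [inf_comm] at h2
  have hmap : M'.map D0.M.mkQ = (D.comap Y.subtype).map e.toLinearMap := by
    apply le_antisymm
    · rintro w ⟨z, hzM, rfl⟩
      refine ⟨e.symm (D0.M.mkQ z), (hmem' z).mp hzM, ?_⟩
      simp
    · rintro w ⟨w', hw', rfl⟩
      obtain ⟨z, hz⟩ := Submodule.mkQ_surjective D0.M (e.toLinearMap w')
      refine ⟨z, ?_, hz⟩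
      show z ∈ M'
      rw [hmem' z, hz]
      simpa using hw'
  have hM'fg : M'.FG := by
    apply Submodule.fg_of_fg_map_of_fg_inf_ker D0.M.mkQ
    · rw [hmap]; exact hYDfg.map _
    · rw [Submodule.ker_mkQ, inf_eq_right.mpr hMle]
      exact D0.M_fg
  -- gradedness of M'
  have hM'graded : ∀ z ∈ M', ∀ n : ℤ, (DirectSum.decompose D0.𝒩 z n : D0.N) ∈ M' := by
    intro z hz n
    have hyD : ((e.symm (D0.M.mkQ z) : ↥Y) : X) ∈ D := (hmem' z).mp hz
    have hkey := commute_decompose ℳ hYgr D0.𝒩 D0.M D0.M_graded e he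
      ((e.symm (D0.M.mkQ z) : ↥Y) : X) (e.symm (D0.M.mkQ z)).2 z
      (e.apply_symm_apply (D0.M.mkQ z)) n
      (decomp_mem_of_gradedSub ℳ hYgr (e.symm (D0.M.mkQ z)).2 n)
    rw [hmem', ← hkey, e.symm_apply_apply]
    exact decomp_mem_of_gradedSub ℳ hDgr hyD n
  -- the equivalence
  set eY : ↥Y' ≃ₗ[R] (D0.N ⧸ M') :=
    (φ.quotKerEquivRange.trans (LinearEquiv.ofEq _ _ hrange)).symm with heYdef
  have hval : ∀ z : D0.N, ((eY.symm (M'.mkQ z) : ↥Y') : X ⧸ D) = φ z := by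
    intro z
    show ((LinearEquiv.ofEq _ _ hrange) (φ.quotKerEquivRange (Submodule.Quotient.mk z))
        : X ⧸ D) = φ z
    rw [LinearEquiv.coe_ofEq_apply, LinearMap.quotKerEquivRange_apply_mk]
  have key : ∀ n : ℤ,
      ⇑eY.symm '' (⇑M'.mkQ '' ((D0.𝒩 n : Submodule A D0.N) : Set D0.N))
        = ((((ℳ n).map (D.mkQ.restrictScalars A)).comap
            (Y'.subtype.restrictScalars A) : Submodule A ↥Y') : Set ↥Y') := by
    intro n
    ext v
    constructor
    · rintro ⟨w, ⟨z, hz, rfl⟩, rfl⟩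
      simp only [SetLike.mem_coe, Submodule.mem_comap]
      have h1 : D0.M.mkQ z ∈ ⇑D0.M.mkQ '' ((D0.𝒩 n : Submodule A D0.N) : Set D0.N) :=
        ⟨z, hz, rfl⟩
      rw [← he n] at h1
      obtain ⟨w', hw', hew'⟩ := h1
      have hvv : (Y'.subtype.restrictScalars A) (eY.symm (M'.mkQ z)) = φ z := hval z
      rw [hvv, hφ, ← hew', e.symm_apply_apply]
      exact ⟨(w' : X), by simpa using hw', rfl⟩
    · intro hv
      have hv' : ((v : ↥Y') : X ⧸ D) ∈ (ℳ n).map (D.mkQ.restrictScalars A) := hv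
      obtain ⟨m, hm, hmv⟩ := hv'
      obtain ⟨y0, hy0Y, hy0⟩ := v.2
      obtain ⟨z0, hz0⟩ := Submodule.mkQ_surjective D0.M (e ⟨y0, hy0Y⟩)
      have hd : (DirectSum.decompose ℳ y0 n : X) ∈ Y := decomp_mem_of_gradedSub ℳ hYgr hy0Y n
      have hkey := commute_decompose ℳ hYgr D0.𝒩 D0.M D0.M_graded e he y0 hy0Y z0 hz0.symm n hd
      refine ⟨M'.mkQ (DirectSum.decompose D0.𝒩 z0 n : D0.N),
        ⟨(DirectSum.decompose D0.𝒩 z0 n : D0.N), (DirectSum.decompose D0.𝒩 z0 n).2, rfl⟩, ?_⟩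
      apply Subtype.ext
      rw [hval, hφ, ← hkey, e.symm_apply_apply]
      have hyd : y0 - m ∈ D := by
        rw [← Submodule.Quotient.eq]
        show D.mkQ y0 = D.mkQ m
        rw [hy0]
        exact hmv.symm
      have h5 : (DirectSum.decompose ℳ (y0 - m) n : X) ∈ D :=
        decomp_mem_of_gradedSub ℳ hDgr hyd n
      have h6 : (DirectSum.decompose ℳ (y0 - m) n : X)
          = (DirectSum.decompose ℳ y0 n : X) - (DirectSum.decompose ℳ m n : X) := by
        rw [DirectSum.decompose_sub, DirectSum.sub_apply]; rfl
      have h7 : (DirectSum.decompose ℳ m n : X) = m := DirectSum.decompose_of_mem_same ℳ hm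
      rw [h6, h7] at h5
      have h8 : D.mkQ ((DirectSum.decompose ℳ y0 n : X)) = D.mkQ m := by
        rw [Submodule.mkQ_apply, Submodule.mkQ_apply]
        exact (Submodule.Quotient.eq D).mpr h5
      rw [h8]
      exact hmv
  refine ⟨Y', ?_, ?_, ?_⟩
  · -- graded submodule
    show Y'.restrictScalars A
        = ⨆ n : ℤ, (Y'.restrictScalars A ⊓ (ℳ n).map (D.mkQ.restrictScalars A))
    apply le_antisymm
    · intro v hv
      have hv' : v ∈ Y' := hv
      obtain ⟨y, hy, rfl⟩ := hv'
      have hy2 : y ∈ ⨆ k : ℤ, (Y.restrictScalars A ⊓ ℳ k) := by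
        have : y ∈ Y.restrictScalars A := hy
        rwa [hYgr] at this
      refine Submodule.iSup_induction
        (motive := fun y : X => D.mkQ y
          ∈ ⨆ n : ℤ, (Y'.restrictScalars A ⊓ (ℳ n).map (D.mkQ.restrictScalars A)))
        _ hy2 (fun k x hx => ?_) ?_ (fun a b ha hb => ?_)
      · exact Submodule.mem_iSup_of_mem k ⟨⟨x, hx.1, rfl⟩, ⟨x, hx.2, rfl⟩⟩
      · rw [map_zero]; exact zero_mem _
      · rw [map_add]; exact add_mem ha hb
    · exact iSup_le fun n => inf_le_left
  · -- InA1
    refine ⟨{ D0 with M := M', M_fg := hM'fg, M_graded := hM'graded }, eY, ?_⟩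
    intro n
    rw [← key n, Set.image_image]
    simp only [LinearEquiv.apply_symm_apply, Set.image_id']
  · -- finiteness of the quotient
    have hker2 : Y ≤ LinearMap.ker (Y'.mkQ.comp D.mkQ) := by
      intro y hy
      simp only [LinearMap.mem_ker, LinearMap.comp_apply]
      rw [Submodule.mkQ_apply, Submodule.mkQ_apply, Submodule.Quotient.mk_eq_zero]
      exact Submodule.mem_map_of_mem hy
    have hsurj : Function.Surjective (Submodule.liftQ Y (Y'.mkQ.comp D.mkQ) hker2) := by
      intro c
      obtain ⟨w, rfl⟩ := Submodule.mkQ_surjective Y' c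
      obtain ⟨x, rfl⟩ := Submodule.mkQ_surjective D w
      exact ⟨Submodule.Quotient.mk x, rfl⟩
    exact Module.Finite.of_surjective _ hsurj
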